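/- arXiv:1110.3715 — 4 statements merged into one kernel-verified Lean document; each statement's English description precedes it below -/
import Mathlib

section
/- Second mean value theorem. Let F : ℝ → ℝ be continuous with lim_{x→−∞} F(x) = 0 and lim_{x→∞} F(x) = F_∞ ∈ ℝ. Let g : ℝ → ℝ be bounded, nondecreasing and right continuous, with limits g(−∞) at −∞ and g(+∞) at +∞, and let μ_g be its Lebesgue–Stieltjes measure. Then there exists c ∈ ℝ with c ∈ F(ℝ) ∪ {0, F_∞} (c = F(ξ) for some ξ in the extended real line) such that F_∞ · g(+∞) − ∫_ℝ F dμ_g = g(−∞) · c + g(+∞) · (F_∞ − c). -/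
open MeasureTheory Filter Topology

/-- A continuous function with finite limits at `±∞` is bounded. -/
lemma smv_bounded (F : ℝ → ℝ) (hF : Continuous F) (Finf : ℝ)
    (hbot : Tendsto F atBot (𝓝 0)) (htop : Tendsto F atTop (𝓝 Finf)) :
    ∃ C, ∀ x, |F x| ≤ C := by
  have h1 : ∀ᶠ x in atTop, dist (F x) Finf < 1 := htop (Metric.ball_mem_nhds Finf one_pos)
  have h2 : ∀ᶠ x in atBot, dist (F x) 0 < 1 := hbot (Metric.ball_mem_nhds 0 one_pos)
  obtain ⟨B, hB⟩ := eventually_atTop.1 h1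
  obtain ⟨A, hA⟩ := eventually_atBot.1 h2
  obtain ⟨C, hC⟩ := (isCompact_Icc (a := A) (b := B)).exists_bound_of_continuousOn
    hF.continuousOn
  refine ⟨max C (|Finf| + 1), fun x => ?_⟩
  rcases le_total x A with hx | hx
  · have := hA x hx
    rw [Real.dist_eq, sub_zero] at this
    have h3 : |F x| ≤ |Finf| + 1 := by
      have := abs_nonneg Finf; linarith
    exact le_max_of_le_right h3
  · rcases le_total B x with hx' | hx'
    · have := hB x hx'
      rw [Real.dist_eq] at this
      have h3 : |F x| ≤ |Finf| + 1 := by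
        calc |F x| = |F x - Finf + Finf| := by ring_nf
        _ ≤ |F x - Finf| + |Finf| := abs_add_le _ _
        _ ≤ |Finf| + 1 := by linarith
      exact le_max_of_le_right h3
    · have := hC x ⟨hx, hx'⟩
      rw [Real.norm_eq_abs] at this
      exact le_max_of_le_left this

/-- Closure of the range of a continuous function with limits `0` and `Finf` at `∓∞`. -/
lemma smv_closure (F : ℝ → ℝ) (hF : Continuous F) (Finf : ℝ)
    (hbot : Tendsto F atBot (𝓝 0)) (htop : Tendsto F atTop (𝓝 Finf)) :
    closure (Set.range F) ⊆ Set.range F ∪ {0, Finf} := by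
  intro y hy
  by_contra hyn
  simp only [Set.mem_union, Set.mem_insert_iff, Set.mem_singleton_iff, not_or] at hyn
  obtain ⟨hyr, hy0, hyF⟩ := hyn
  set δ : ℝ := min (dist y 0) (dist y Finf) / 2 with hδ
  have hδpos : 0 < δ := by
    apply div_pos _ two_pos
    exact lt_min (dist_pos.2 hy0) (dist_pos.2 hyF)
  have h2δ0 : 2 * δ ≤ dist y 0 := by
    have := min_le_left (dist y 0) (dist y Finf); rw [hδ]; linarith
  have h2δF : 2 * δ ≤ dist y Finf := by
    have := min_le_right (dist y 0) (dist y Finf); rw [hδ]; linarith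
  have h1 : ∀ᶠ x in atTop, δ ≤ dist (F x) y := by
    filter_upwards [htop (Metric.ball_mem_nhds Finf hδpos)] with x hx
    have hx' : dist (F x) Finf < δ := hx
    have htri := dist_triangle y (F x) Finf
    rw [dist_comm]
    linarith
  have h2 : ∀ᶠ x in atBot, δ ≤ dist (F x) y := by
    filter_upwards [hbot (Metric.ball_mem_nhds 0 hδpos)] with x hx
    have hx' : dist (F x) 0 < δ := hx
    have htri := dist_triangle y (F x) 0
    rw [dist_comm]
    linarith
  obtain ⟨B, hB⟩ := eventually_atTop.1 h1
  obtain ⟨A, hA⟩ := eventually_atBot.1 h2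
  have hK : IsCompact (F '' Set.Icc A B) := isCompact_Icc.image hF
  have hyK : y ∈ closure (F '' Set.Icc A B) := by
    rw [mem_closure_iff] at hy ⊢
    intro U hU hyU
    obtain ⟨z, ⟨hzU, hzb⟩, hzr⟩ := hy (U ∩ Metric.ball y δ)
      (hU.inter Metric.isOpen_ball) ⟨hyU, Metric.mem_ball_self hδpos⟩
    obtain ⟨x, rfl⟩ := hzr
    have hdx : dist (F x) y < δ := hzb
    have hxA : A ≤ x := by
      by_contra hc
      exact absurd (hA x (le_of_not_ge hc)) (not_le.2 hdx)
    have hxB : x ≤ B := by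
      by_contra hc
      exact absurd (hB x (le_of_not_ge hc)) (not_le.2 hdx)
    exact ⟨F x, hzU, ⟨x, ⟨hxA, hxB⟩, rfl⟩⟩
  rw [hK.isClosed.closure_eq] at hyK
  obtain ⟨x, _, rfl⟩ := hyK
  exact hyr ⟨x, rfl⟩

/-- Second mean value theorem for the pairing of F ∈ ℬ_c with the
Lebesgue–Stieltjes measure of a bounded nondecreasing right-continuous function. -/
theorem second_mean_value (F : ℝ → ℝ) (hF : Continuous F)
    (Finf : ℝ) (hbot : Tendsto F atBot (𝓝 0)) (htop : Tendsto F atTop (𝓝 Finf))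
    (g : StieltjesFunction ℝ) (gbot gtop : ℝ)
    (hgbot : Tendsto (⇑g) atBot (𝓝 gbot)) (hgtop : Tendsto (⇑g) atTop (𝓝 gtop)) :
    ∃ c : ℝ, (c ∈ Set.range F ∨ c = 0 ∨ c = Finf) ∧
      Finf * gtop - ∫ x : ℝ, F x ∂g.measure = gbot * c + gtop * (Finf - c) := by
  have huniv : g.measure Set.univ = ENNReal.ofReal (gtop - gbot) :=
    g.measure_univ hgbot hgtop
  have h1 : gbot ≤ g 0 := le_of_tendsto hgbot (eventually_atBot.2 ⟨0, fun x hx => g.mono hx⟩)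
  have h2 : g 0 ≤ gtop := ge_of_tendsto hgtop (eventually_atTop.2 ⟨0, fun x hx => g.mono hx⟩)
  rcases eq_or_lt_of_le (h1.trans h2) with heq | hlt
  · -- degenerate case: the measure is zero
    have hm0 : g.measure = 0 := by
      rw [← Measure.measure_univ_eq_zero, huniv, ← heq, sub_self, ENNReal.ofReal_zero]
    refine ⟨0, Or.inr (Or.inl rfl), ?_⟩
    rw [hm0, integral_zero_measure]
    ring
  · set M := gtop - gbot with hMdef
    have hM : 0 < M := by rw [hMdef]; linarith
    haveI : IsFiniteMeasure g.measure := g.isFiniteMeasure hgbot hgtop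
    obtain ⟨C, hC⟩ := smv_bounded F hF Finf hbot htop
    have hint : Integrable F g.measure := by
      refine Integrable.mono' (integrable_const C) hF.aestronglyMeasurable ?_
      exact ae_of_all _ fun x => by simpa [Real.norm_eq_abs] using hC x
    set T := closure (Set.range F) with hT
    have hTne : T.Nonempty := (Set.range_nonempty F).closure
    have hTb : Bornology.IsBounded T := by
      refine Bornology.IsBounded.closure ?_
      rw [Metric.isBounded_iff_subset_closedBall 0]
      exact ⟨C, by rintro _ ⟨x, rfl⟩; simpa [Real.dist_eq] using hC x⟩
    have hTc : IsCompact T := Metric.isCompact_of_isClosed_isBounded isClosed_closure hTb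
    have hTconn : IsConnected T :=
      ⟨hTne, (isPreconnected_range hF).closure⟩
    have hIcc := eq_Icc_of_connected_compact hTconn hTc
    have hmemT : ∀ x, F x ∈ T := fun x => subset_closure (Set.mem_range_self x)
    have hax : ∀ x, sInf T ≤ F x := fun x => by
      have := hmemT x; rw [hIcc] at this; exact this.1
    have hxb : ∀ x, F x ≤ sSup T := fun x => by
      have := hmemT x; rw [hIcc] at this; exact this.2
    have hMreal : (g.measure Set.univ).toReal = M := by
      rw [huniv, ENNReal.toReal_ofReal hM.le]
    have hlow : sInf T * M ≤ ∫ x, F x ∂g.measure := by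
      calc sInf T * M = ∫ _x, sInf T ∂g.measure := by
            rw [integral_const, measureReal_def, hMreal, smul_eq_mul, mul_comm]
        _ ≤ _ := integral_mono (integrable_const _) hint hax
    have hup : (∫ x, F x ∂g.measure) ≤ sSup T * M := by
      calc (∫ x, F x ∂g.measure) ≤ ∫ _x, sSup T ∂g.measure :=
            integral_mono hint (integrable_const _) hxb
        _ = sSup T * M := by rw [integral_const, measureReal_def, hMreal, smul_eq_mul, mul_comm]
    set m := (∫ x, F x ∂g.measure) / M with hm
    have hma : sInf T ≤ m := (le_div_iff₀ hM).2 hlow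
    have hmb : m ≤ sSup T := (div_le_iff₀ hM).2 hup
    have hmT : m ∈ T := by rw [hIcc]; exact ⟨hma, hmb⟩
    have hmS := smv_closure F hF Finf hbot htop hmT
    refine ⟨m, by rcases (by simpa using hmS : m = 0 ∨ m = Finf ∨ ∃ y, F y = m) with h|h|h; exacts [Or.inr (Or.inl h), Or.inr (Or.inr h), Or.inl h], ?_⟩
    have h := mul_div_cancel₀ (∫ x, F x ∂g.measure) (ne_of_gt hM)
    rw [← h, hMdef]
    ring
end

section
/- The Banach lattice ℬ_r (with the pointwise order) has no order unit: for every e ∈ ℬ_r with e(x) ≥ 0 for all x ∈ ℝ, there exists F ∈ ℬ_r such that for every real λ > 0 there is a point x ∈ ℝ with |F(x)| > λ·e(x). (Consequently the lattices 𝒜^n_r, isomorphic to ℬ_r, have no order unit.) -/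
open MeasureTheory Filter Topology

/-- Membership in ℬ_r: left continuous (in particular left limits exist),
right limits exist, vanishes at -∞, has a real limit at ∞. -/
def MemBr (F : ℝ → ℝ) : Prop :=
  (∀ x : ℝ, Tendsto F (𝓝[<] x) (𝓝 (F x))) ∧
  (∀ x : ℝ, ∃ R : ℝ, Tendsto F (𝓝[>] x) (𝓝 R)) ∧
  Tendsto F atBot (𝓝 0) ∧
  (∃ L : ℝ, Tendsto F atTop (𝓝 L))

lemma memBr_step (a : ℝ) : MemBr (fun x => if a < x then (1:ℝ) else 0) := by
  refine ⟨?_, ?_, ?_, ⟨1, ?_⟩⟩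
  · intro x
    by_cases h : a < x
    · have : ∀ᶠ y in 𝓝[<] x, (if a < y then (1:ℝ) else 0) = (if a < x then 1 else 0) := by
        filter_upwards [Ioo_mem_nhdsLT_of_mem ⟨h, le_refl x⟩] with y hy
        simp [h, hy.1]
      exact tendsto_const_nhds.congr' (Filter.EventuallyEq.symm this)
    · have : ∀ᶠ y in 𝓝[<] x, (if a < y then (1:ℝ) else 0) = (if a < x then 1 else 0) := by
        filter_upwards [self_mem_nhdsWithin] with y hy
        have : ¬ a < y := fun hc => h (lt_of_lt_of_le hc (le_of_lt hy))
        simp [h, this]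
      exact tendsto_const_nhds.congr' (Filter.EventuallyEq.symm this)
  · intro x
    by_cases h : a ≤ x
    · refine ⟨1, ?_⟩
      have : ∀ᶠ y in 𝓝[>] x, (if a < y then (1:ℝ) else 0) = 1 := by
        filter_upwards [self_mem_nhdsWithin] with y hy
        simp [lt_of_le_of_lt h hy]
      exact tendsto_const_nhds.congr' (Filter.EventuallyEq.symm this)
    · refine ⟨0, ?_⟩
      push_neg at h
      have : ∀ᶠ y in 𝓝[>] x, (if a < y then (1:ℝ) else 0) = 0 := by
        filter_upwards [Ioo_mem_nhdsGT_of_mem ⟨le_refl x, h⟩] with y hy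
        simp [not_lt.2 hy.2.le]
      exact tendsto_const_nhds.congr' (Filter.EventuallyEq.symm this)
  · have : ∀ᶠ y in atBot, (if a < y then (1:ℝ) else 0) = 0 := by
      filter_upwards [eventually_le_atBot a] with y hy
      simp [not_lt.2 hy]
    exact tendsto_const_nhds.congr' (Filter.EventuallyEq.symm this)
  · have : ∀ᶠ y in atTop, (if a < y then (1:ℝ) else 0) = 1 := by
      filter_upwards [eventually_gt_atTop a] with y hy
      simp [hy]
    exact tendsto_const_nhds.congr' (Filter.EventuallyEq.symm this)

/-- ℬ_r has no order unit for the pointwise order. -/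
theorem Br_no_order_unit (e : ℝ → ℝ) (he : MemBr e) (hpos : ∀ x : ℝ, 0 ≤ e x) :
    ∃ F : ℝ → ℝ, MemBr F ∧ ∀ lam : ℝ, 0 < lam → ∃ x : ℝ, lam * e x < |F x| := by
  by_cases hz : ∃ x0 : ℝ, e x0 = 0
  · obtain ⟨x0, hx0⟩ := hz
    refine ⟨fun x => if x0 - 1 < x then 1 else 0, memBr_step _, ?_⟩
    intro lam hlam
    refine ⟨x0, ?_⟩
    have : x0 - 1 < x0 := by linarith
    simp [hx0, this]
  · push_neg at hz
    have hepos : ∀ x, 0 < e x := fun x => lt_of_le_of_ne (hpos x) (Ne.symm (hz x))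
    obtain ⟨hleft, hright, hbot, L, htop⟩ := he
    refine ⟨fun x => Real.sqrt (e x), ⟨?_, ?_, ?_, ⟨Real.sqrt L, ?_⟩⟩, ?_⟩
    · intro x
      exact (Real.continuous_sqrt.continuousAt.tendsto).comp (hleft x)
    · intro x
      obtain ⟨R, hR⟩ := hright x
      exact ⟨Real.sqrt R, (Real.continuous_sqrt.continuousAt.tendsto).comp hR⟩
    · have := (Real.continuous_sqrt.continuousAt.tendsto).comp hbot
      simpa [Function.comp_def] using this
    · exact (Real.continuous_sqrt.continuousAt.tendsto).comp htop
    · intro lam hlam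
      have hsmall : ∀ᶠ x in atBot, e x < 1 / lam ^ 2 := by
        have hmem : Set.Iio (1 / lam ^ 2) ∈ 𝓝 (0:ℝ) :=
          Iio_mem_nhds (by positivity)
        exact hbot hmem
      obtain ⟨x, hx⟩ := hsmall.exists
      refine ⟨x, ?_⟩
      have hex := hepos x
      set s := Real.sqrt (e x) with hs
      have hs2 : s ^ 2 = e x := Real.sq_sqrt (hpos x)
      have hspos : 0 < s := Real.sqrt_pos.2 hex
      rw [abs_of_nonneg (Real.sqrt_nonneg _)]
      have h1 : lam ^ 2 * e x < 1 := by
        have := mul_lt_mul_of_pos_left hx (show (0:ℝ) < lam ^ 2 by positivity)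
        have h2 : lam ^ 2 * (1 / lam ^ 2) = 1 := by field_simp
        linarith [h2 ▸ this]
      nlinarith [mul_pos hlam hspos, sq_nonneg (lam * s - 1), hs2, hspos]
end

section
/- The lattice ℬ_r is not order complete (not Dedekind complete): there exists a nonempty countable family S ⊆ ℬ_r that has an upper bound in ℬ_r for the pointwise order, yet S has no least upper bound in ℬ_r; that is, no G ∈ ℬ_r satisfies both (i) F(x) ≤ G(x) for all x ∈ ℝ and all F ∈ S, and (ii) G(x) ≤ H(x) for all x ∈ ℝ whenever H ∈ ℬ_r satisfies F(x) ≤ H(x) for all x and all F ∈ S. (An example is S = {F_n : n ∈ ℕ} with F_n(x) = sin(π/x) for x ≥ 1/n and F_n(x) = 0 for x < 1/n.) -/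
open MeasureTheory Filter Topology

open Real Set

/-- The n-th function: `sin (π/x)` truncated (continuously) to `x ≥ 1/(n+1)`. -/
noncomputable def myF (n : ℕ) : ℝ → ℝ :=
  fun x => Real.sin (π / max x (1 / ((n : ℝ) + 1)))

/-- The auxiliary upper bounds: equal to `max (sin (π/x)) 0` for `x > a`,
`1` on `(0, a]`, and `0` on `(-∞, 0]`. -/
noncomputable def myH (a : ℝ) : ℝ → ℝ :=
  fun x => if a < x then max (Real.sin (π / x)) 0 else if 0 < x then 1 else 0

/-- The "tail" function `max (sin (π/x)) 0`. -/
noncomputable def myg : ℝ → ℝ := fun x => max (Real.sin (π / x)) 0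

lemma myg_contAt {x : ℝ} (hx : x ≠ 0) : ContinuousAt myg x := by
  have h1 : ContinuousAt (fun y : ℝ => π / y) x :=
    ContinuousAt.div continuousAt_const continuousAt_id hx
  exact ((Real.continuous_sin.continuousAt.comp h1)).max continuousAt_const

lemma sin_pi_div_nat (k : ℕ) : Real.sin (π / (1 / ((k : ℝ) + 1))) = 0 := by
  have hk : ((k : ℝ) + 1) ≠ 0 := by positivity
  have : π / (1 / ((k : ℝ) + 1)) = ((k + 1 : ℕ) : ℝ) * π := by
    push_cast; field_simp
  rw [this, Real.sin_nat_mul_pi]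

lemma sin_pi_div_special (k : ℕ) : Real.sin (π / (2 / (4 * (k : ℝ) + 1))) = 1 := by
  have hk : (4 * (k : ℝ) + 1) ≠ 0 := by positivity
  have : π / (2 / (4 * (k : ℝ) + 1)) = π / 2 + (k : ℝ) * (2 * π) := by
    field_simp; ring
  rw [this, Real.sin_add_nat_mul_two_pi, Real.sin_pi_div_two]

lemma myF_cont (n : ℕ) : Continuous (myF n) := by
  have hc : (0 : ℝ) < 1 / ((n : ℝ) + 1) := by positivity
  apply Real.continuous_sin.comp
  apply Continuous.div continuous_const (continuous_id.max continuous_const)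
  intro x
  exact ne_of_gt (lt_of_lt_of_le hc (le_max_right _ _))

lemma myF_eq_zero {n : ℕ} {x : ℝ} (hx : x ≤ 1 / ((n : ℝ) + 1)) : myF n x = 0 := by
  rw [myF, max_eq_right hx, sin_pi_div_nat]

lemma memBr_myF (n : ℕ) : MemBr (myF n) := by
  have hcont := myF_cont n
  refine ⟨fun x => ((hcont.tendsto x).mono_left nhdsWithin_le_nhds),
    fun x => ⟨myF n x, (hcont.tendsto x).mono_left nhdsWithin_le_nhds⟩, ?_, ?_⟩
  · -- atBot
    have hev : myF n =ᶠ[atBot] (fun _ => 0) := by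
      filter_upwards [eventually_le_atBot (1 / ((n : ℝ) + 1))] with x hx
      exact myF_eq_zero hx
    exact Tendsto.congr' hev.symm tendsto_const_nhds
  · -- atTop
    refine ⟨0, ?_⟩
    have hdiv : Tendsto (fun x : ℝ => π / max x (1 / ((n : ℝ) + 1))) atTop (𝓝 0) :=
      Tendsto.div_atTop tendsto_const_nhds
        (tendsto_atTop_mono (fun x => le_max_left x _) tendsto_id)
    have := (Real.continuous_sin.tendsto 0).comp hdiv
    rw [Real.sin_zero] at this
    exact this

lemma myH_eq_myg {a x : ℝ} (h : a < x) : myH a x = myg x := by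
  simp [myH, myg, h]

lemma memBr_myH {a : ℝ} (ha : 0 < a) : MemBr (myH a) := by
  refine ⟨?_, ?_, ?_, ?_⟩
  · -- left continuity
    intro x
    rcases le_or_gt x 0 with hx | hx
    · have hvx : myH a x = 0 := by
        simp [myH, not_lt.mpr hx, not_lt.mpr (hx.trans ha.le)]
      rw [hvx]
      refine Tendsto.congr' ?_ tendsto_const_nhds
      filter_upwards [self_mem_nhdsWithin] with y (hy : y < x)
      have hy0 : y ≤ 0 := (hy.trans_le hx).le
      simp [myH, not_lt.mpr hy0, not_lt.mpr (hy0.trans ha.le)]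
    · rcases le_or_gt x a with hxa | hxa
      · have hvx : myH a x = 1 := by simp [myH, not_lt.mpr hxa, hx]
        rw [hvx]
        refine Tendsto.congr' ?_ tendsto_const_nhds
        filter_upwards [Ioo_mem_nhdsLT_of_mem (⟨hx, le_refl x⟩ : x ∈ Ioc 0 x)]
          with y hy
        simp [myH, not_lt.mpr (hy.2.le.trans hxa), hy.1]
      · rw [myH_eq_myg hxa]
        refine Tendsto.congr' ?_
          (((myg_contAt (ne_of_gt (ha.trans hxa))).tendsto).mono_left nhdsWithin_le_nhds)
        filter_upwards [Ioo_mem_nhdsLT_of_mem (⟨hxa, le_refl x⟩ : x ∈ Ioc a x)]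
          with y hy
        exact (myH_eq_myg hy.1).symm
  · -- right limits
    intro x
    rcases lt_or_ge x 0 with hx | hx
    · refine ⟨0, Tendsto.congr' ?_ tendsto_const_nhds⟩
      filter_upwards [Ioo_mem_nhdsGT_of_mem (⟨le_refl x, hx⟩ : x ∈ Ico x 0)]
        with y hy
      have hy0 : y ≤ 0 := hy.2.le
      simp [myH, not_lt.mpr hy0, not_lt.mpr (hy0.trans ha.le)]
    · rcases lt_or_ge x a with hxa | hxa
      · refine ⟨1, Tendsto.congr' ?_ tendsto_const_nhds⟩
        filter_upwards [Ioo_mem_nhdsGT_of_mem (⟨le_refl x, hxa⟩ : x ∈ Ico x a)]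
          with y hy
        simp [myH, not_lt.mpr hy.2.le, lt_of_le_of_lt hx hy.1]
      · refine ⟨myg x, Tendsto.congr' ?_
          (((myg_contAt (ne_of_gt (ha.trans_le hxa))).tendsto).mono_left nhdsWithin_le_nhds)⟩
        filter_upwards [self_mem_nhdsWithin] with y (hy : x < y)
        exact (myH_eq_myg (hxa.trans_lt hy)).symm
  · -- atBot
    refine Tendsto.congr' ?_ tendsto_const_nhds
    filter_upwards [eventually_le_atBot (0 : ℝ)] with x hx
    simp [myH, not_lt.mpr hx, not_lt.mpr (hx.trans ha.le)]
  · -- atTop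
    refine ⟨0, ?_⟩
    have hdiv : Tendsto (fun x : ℝ => π / x) atTop (𝓝 0) :=
      Tendsto.div_atTop tendsto_const_nhds tendsto_id
    have hg : Tendsto myg atTop (𝓝 0) := by
      have := ((Real.continuous_sin.tendsto 0).comp hdiv).max
        (tendsto_const_nhds (x := (0 : ℝ)))
      show Tendsto (fun x => max (Real.sin (π / x)) 0) atTop (𝓝 0)
      simpa [Function.comp, Real.sin_zero] using this
    refine Tendsto.congr' ?_ hg
    filter_upwards [eventually_gt_atTop a] with x hx
    exact (myH_eq_myg hx).symm

lemma myF_le_myH (n : ℕ) {a : ℝ} (ha : 0 < a) (x : ℝ) : myF n x ≤ myH a x := by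
  rcases lt_or_ge a x with hax | hax
  · rw [myH_eq_myg hax]
    rcases le_total x (1 / ((n : ℝ) + 1)) with hxc | hxc
    · rw [myF_eq_zero hxc]; exact le_max_right _ _
    · rw [myF, max_eq_left hxc]; exact le_max_left _ _
  · rcases lt_or_ge 0 x with hx | hx
    · have : myH a x = 1 := by simp [myH, not_lt.mpr hax, hx]
      rw [this, myF]; exact Real.sin_le_one _
    · have h1 : myH a x = 0 := by
        simp [myH, not_lt.mpr hax, not_lt.mpr hx]
      have h2 : myF n x = 0 := myF_eq_zero (hx.trans (by positivity))
      rw [h1, h2]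

/-- ℬ_r is not order (Dedekind) complete: some nonempty countable family of
elements of ℬ_r is bounded above in ℬ_r, yet has no least upper bound in ℬ_r. -/
theorem Br_not_order_complete :
    ∃ S : Set (ℝ → ℝ), S.Nonempty ∧ S.Countable ∧ (∀ F ∈ S, MemBr F) ∧
      (∃ H : ℝ → ℝ, MemBr H ∧ ∀ F ∈ S, ∀ x : ℝ, F x ≤ H x) ∧
      ¬ ∃ G : ℝ → ℝ, MemBr G ∧ (∀ F ∈ S, ∀ x : ℝ, F x ≤ G x) ∧
        (∀ H : ℝ → ℝ, MemBr H → (∀ F ∈ S, ∀ x : ℝ, F x ≤ H x) →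
          ∀ x : ℝ, G x ≤ H x) := by
  refine ⟨Set.range myF, Set.range_nonempty _, Set.countable_range _,
    ?_, ⟨myH 1, memBr_myH one_pos, ?_⟩, ?_⟩
  · rintro F ⟨n, rfl⟩; exact memBr_myF n
  · rintro F ⟨n, rfl⟩ x; exact myF_le_myH n one_pos x
  · rintro ⟨G, hG, hub, hlub⟩
    -- lower estimate on G
    have hlow : ∀ x : ℝ, 0 < x → Real.sin (π / x) ≤ G x := by
      intro x hx
      obtain ⟨n, hn⟩ := exists_nat_gt (1 / x)
      have hn' : 1 / x < (n : ℝ) + 1 := hn.trans (lt_add_one _)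
      have hc : 1 / ((n : ℝ) + 1) ≤ x := by
        rw [div_le_iff₀ (by positivity)]
        rw [div_lt_iff₀ hx] at hn'
        nlinarith
      have := hub (myF n) ⟨n, rfl⟩ x
      rwa [myF, max_eq_left hc] at this
    -- upper estimate on G
    have hhigh : ∀ x : ℝ, 0 < x → G x ≤ max (Real.sin (π / x)) 0 := by
      intro x hx
      have h2 : (0 : ℝ) < x / 2 := by positivity
      have := hlub (myH (x / 2)) (memBr_myH h2)
        (by rintro F ⟨n, rfl⟩ y; exact myF_le_myH n h2 y) x
      rwa [myH_eq_myg (by linarith), myg] at this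
    -- the right limit of G at 0
    obtain ⟨R, hR⟩ := hG.2.1 0
    -- G vanishes at 1/(k+1)
    have h0 : ∀ k : ℕ, G (1 / ((k : ℝ) + 1)) = 0 := by
      intro k
      have hk : (0 : ℝ) < 1 / ((k : ℝ) + 1) := by positivity
      have h1 := hlow _ hk
      have h2 := hhigh _ hk
      rw [sin_pi_div_nat] at h1 h2
      simp only [max_self] at h2
      exact le_antisymm h2 h1
    -- G equals 1 at 2/(4k+1)
    have h1 : ∀ k : ℕ, G (2 / (4 * (k : ℝ) + 1)) = 1 := by
      intro k
      have hk : (0 : ℝ) < 2 / (4 * (k : ℝ) + 1) := by positivity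
      have ha := hlow _ hk
      have hb := hhigh _ hk
      rw [sin_pi_div_special] at ha hb
      have : max (1 : ℝ) 0 = 1 := by norm_num
      rw [this] at hb
      linarith
    -- two sequences tending to 0 from the right
    have hseq1 : Tendsto (fun k : ℕ => 1 / ((k : ℝ) + 1)) atTop (𝓝[>] (0 : ℝ)) := by
      apply tendsto_nhdsWithin_of_tendsto_nhds_of_eventually_within
      · exact tendsto_one_div_add_atTop_nhds_zero_nat
      · exact Eventually.of_forall fun k => Set.mem_Ioi.mpr (by positivity)
    have hseq2 : Tendsto (fun k : ℕ => 2 / (4 * (k : ℝ) + 1)) atTop (𝓝[>] (0 : ℝ)) := by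
      apply tendsto_nhdsWithin_of_tendsto_nhds_of_eventually_within
      · apply Tendsto.div_atTop tendsto_const_nhds
        apply tendsto_atTop_add_const_right
        exact (tendsto_natCast_atTop_atTop (R := ℝ)).const_mul_atTop (by norm_num)
      · exact Eventually.of_forall fun k => Set.mem_Ioi.mpr (by positivity)
    have hR0 : R = 0 := by
      have := hR.comp hseq1
      have h' : Tendsto (fun _ : ℕ => (0 : ℝ)) atTop (𝓝 R) := by
        exact Tendsto.congr (fun k => h0 k) this
      exact tendsto_nhds_unique h' tendsto_const_nhds
    have hR1 : R = 1 := by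
      have := hR.comp hseq2
      have h' : Tendsto (fun _ : ℕ => (1 : ℝ)) atTop (𝓝 R) := by
        exact Tendsto.congr (fun k => h1 k) this
      exact tendsto_nhds_unique h' tendsto_const_nhds
    rw [hR0] at hR1
    norm_num at hR1
end

section
/- Hölder inequality. Let F ∈ ℬ_c with F_∞ = lim_{x→∞} F(x) and ‖F‖_∞ = sup_{x∈ℝ}|F(x)|. Let g : ℝ → ℝ be of bounded variation with total variation V(g) on ℝ, and suppose g = g₁ − g₂ where g₁, g₂ are bounded nondecreasing right-continuous functions whose variations realise the Jordan decomposition, i.e. (g₁(+∞) − g₁(−∞)) + (g₂(+∞) − g₂(−∞)) = V(g). Then |F_∞·(g₁(+∞) − g₂(+∞)) − ∫_ℝ F dμ_{g₁} + ∫_ℝ F dμ_{g₂}| ≤ ‖F‖_∞ · ( sup_{x∈ℝ}|g(x)| + V(g) ). (The left-hand side is the pairing ∫ F' g = F(∞)g(∞) − ∫ F dg defining the integral of f = F' ∈ 𝒜¹_c against g, and the right-hand side is ‖f‖_{a,1}·‖g‖_{ℬ𝒱}.) -/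
open MeasureTheory Filter Topology

/-- Hölder inequality for the pairing of f = F′ ∈ 𝒜¹_c with a function of
bounded variation g = g₁ − g₂ (Jordan decomposition realising the variation):
|∫ F' g| ≤ ‖F‖_∞ (sup|g| + V(g)). -/
theorem holder_inequality (F : ℝ → ℝ) (hFc : Continuous F)
    (Finf : ℝ) (hbot : Tendsto F atBot (𝓝 0)) (htop : Tendsto F atTop (𝓝 Finf))
    (g : ℝ → ℝ) (hgBV : eVariationOn g Set.univ ≠ ⊤)
    (g₁ g₂ : StieltjesFunction ℝ)
    (g₁bot g₁top g₂bot g₂top : ℝ)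
    (hg₁bot : Tendsto (⇑g₁) atBot (𝓝 g₁bot)) (hg₁top : Tendsto (⇑g₁) atTop (𝓝 g₁top))
    (hg₂bot : Tendsto (⇑g₂) atBot (𝓝 g₂bot)) (hg₂top : Tendsto (⇑g₂) atTop (𝓝 g₂top))
    (hdecomp : ∀ x : ℝ, g x = g₁ x - g₂ x)
    (hjordan : (g₁top - g₁bot) + (g₂top - g₂bot) = (eVariationOn g Set.univ).toReal) :
    |Finf * (g₁top - g₂top) - (∫ x : ℝ, F x ∂g₁.measure) + ∫ x : ℝ, F x ∂g₂.measure|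
      ≤ (⨆ x : ℝ, |F x|) * ((⨆ x : ℝ, |g x|) + (eVariationOn g Set.univ).toReal) := by
  -- bounds for g₁, g₂ pointwise
  have hg₁le : ∀ x, g₁ x ≤ g₁top := fun x =>
    ge_of_tendsto hg₁top (eventually_atTop.2 ⟨x, fun y hy => g₁.mono hy⟩)
  have hg₁ge : ∀ x, g₁bot ≤ g₁ x := fun x =>
    le_of_tendsto hg₁bot (eventually_atBot.2 ⟨x, fun y hy => g₁.mono hy⟩)
  have hg₂le : ∀ x, g₂ x ≤ g₂top := fun x =>
    ge_of_tendsto hg₂top (eventually_atTop.2 ⟨x, fun y hy => g₂.mono hy⟩)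
  have hg₂ge : ∀ x, g₂bot ≤ g₂ x := fun x =>
    le_of_tendsto hg₂bot (eventually_atBot.2 ⟨x, fun y hy => g₂.mono hy⟩)
  have hg₁bt : g₁bot ≤ g₁top := le_trans (hg₁ge 0) (hg₁le 0)
  have hg₂bt : g₂bot ≤ g₂top := le_trans (hg₂ge 0) (hg₂le 0)
  -- F is bounded
  have habsbot : Tendsto (fun x => |F x|) atBot (𝓝 |(0:ℝ)|) := hbot.abs
  have habstop : Tendsto (fun x => |F x|) atTop (𝓝 |Finf|) := htop.abs
  obtain ⟨a, ha⟩ : ∃ a, ∀ x ≤ a, |F x| ≤ |(0:ℝ)| + 1 := by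
    have := habsbot.eventually_le_const (by linarith [abs_nonneg (0:ℝ)] : |(0:ℝ)| < |(0:ℝ)| + 1)
    exact eventually_atBot.1 this
  obtain ⟨b, hb⟩ : ∃ b, ∀ x ≥ b, |F x| ≤ |Finf| + 1 := by
    have := habstop.eventually_le_const (by linarith [abs_nonneg Finf] : |Finf| < |Finf| + 1)
    exact eventually_atTop.1 this
  obtain ⟨C, hC⟩ : ∃ C, ∀ x ∈ Set.Icc a b, |F x| ≤ C := by
    obtain ⟨C, hC⟩ := (isCompact_Icc (a := a) (b := b)).exists_bound_of_continuousOn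
      hFc.continuousOn
    exact ⟨C, fun x hx => by simpa [Real.norm_eq_abs] using hC x hx⟩
  set M₀ : ℝ := max (max (|(0:ℝ)| + 1) (|Finf| + 1)) C with hM₀
  have hFbd : ∀ x, |F x| ≤ M₀ := by
    intro x
    rcases le_total x a with h | h
    · exact le_trans (ha x h) (le_max_of_le_left (le_max_left _ _))
    rcases le_total x b with h' | h'
    · exact le_trans (hC x ⟨h, h'⟩) (le_max_right _ _)
    · exact le_trans (hb x h') (le_max_of_le_left (le_max_right _ _))
  have hFbdd : BddAbove (Set.range fun x => |F x|) := ⟨M₀, by rintro _ ⟨x, rfl⟩; exact hFbd x⟩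
  set M : ℝ := ⨆ x : ℝ, |F x| with hM
  have hFM : ∀ x, |F x| ≤ M := fun x => le_ciSup hFbdd x
  have hM0 : 0 ≤ M := le_trans (abs_nonneg _) (hFM 0)
  -- sup of |g|
  have hgbd : ∀ x, |g x| ≤ max |g₁bot| |g₁top| + max |g₂bot| |g₂top| := by
    intro x
    rw [hdecomp x]
    refine le_trans (abs_sub _ _) (add_le_add (abs_le.2 ?_) (abs_le.2 ?_))
    · constructor
      · linarith [neg_abs_le g₁bot, le_max_left |g₁bot| |g₁top|, hg₁ge x]
      · linarith [le_abs_self g₁top, le_max_right |g₁bot| |g₁top|, hg₁le x]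
    · constructor
      · linarith [neg_abs_le g₂bot, le_max_left |g₂bot| |g₂top|, hg₂ge x]
      · linarith [le_abs_self g₂top, le_max_right |g₂bot| |g₂top|, hg₂le x]
  have hgbdd : BddAbove (Set.range fun x => |g x|) := ⟨_, by rintro _ ⟨x, rfl⟩; exact hgbd x⟩
  set S : ℝ := ⨆ x : ℝ, |g x| with hS
  have hgS : ∀ x, |g x| ≤ S := fun x => le_ciSup hgbdd x
  -- |g₁top - g₂top| ≤ S
  have hgtop : Tendsto g atTop (𝓝 (g₁top - g₂top)) := by
    have : Tendsto (fun x => g₁ x - g₂ x) atTop (𝓝 (g₁top - g₂top)) := hg₁top.sub hg₂top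
    exact this.congr fun x => (hdecomp x).symm
  have htopS : |g₁top - g₂top| ≤ S :=
    le_of_tendsto hgtop.abs (Eventually.of_forall hgS)
  -- |Finf| ≤ M
  have hFinfM : |Finf| ≤ M := le_of_tendsto habstop (Eventually.of_forall hFM)
  -- integral bounds
  haveI h1 : IsFiniteMeasure g₁.measure := g₁.isFiniteMeasure hg₁bot hg₁top
  haveI h2 : IsFiniteMeasure g₂.measure := g₂.isFiniteMeasure hg₂bot hg₂top
  have hint1 : |∫ x : ℝ, F x ∂g₁.measure| ≤ M * (g₁top - g₁bot) := by
    have := norm_integral_le_of_norm_le_const (μ := g₁.measure) (f := F) (C := M)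
      (Eventually.of_forall fun x => by simpa using hFM x)
    rw [measureReal_def, g₁.measure_univ hg₁bot hg₁top, ENNReal.toReal_ofReal (by linarith)] at this
    simpa using this
  have hint2 : |∫ x : ℝ, F x ∂g₂.measure| ≤ M * (g₂top - g₂bot) := by
    have := norm_integral_le_of_norm_le_const (μ := g₂.measure) (f := F) (C := M)
      (Eventually.of_forall fun x => by simpa using hFM x)
    rw [measureReal_def, g₂.measure_univ hg₂bot hg₂top, ENNReal.toReal_ofReal (by linarith)] at this
    simpa using this
  -- conclude
  have h3 : |Finf * (g₁top - g₂top)| ≤ M * S := by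
    rw [abs_mul]
    exact mul_le_mul hFinfM htopS (abs_nonneg _) hM0
  calc |Finf * (g₁top - g₂top) - (∫ x : ℝ, F x ∂g₁.measure) + ∫ x : ℝ, F x ∂g₂.measure|
      ≤ |Finf * (g₁top - g₂top)| + |∫ x : ℝ, F x ∂g₁.measure| + |∫ x : ℝ, F x ∂g₂.measure| := by
        refine le_trans (abs_add_le _ _) ?_
        gcongr
        exact abs_sub _ _
    _ ≤ M * S + M * (g₁top - g₁bot) + M * (g₂top - g₂bot) := by
        gcongr
    _ = M * (S + (eVariationOn g Set.univ).toReal) := by rw [← hjordan]; ring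
end
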